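/- arXiv:math/0006114 — 7 statements merged into one kernel-verified Lean document; each statement's English description precedes it below -/
import Mathlib

section
/- If Z is a matrix with non-negative integer entries commuting with a unitary matrix S, Z_{0,0}=1, and the eigenvalue ratios d_λ = S_{λ,0}/S_{0,0} are positive reals satisfying |S_{λ,ρ}| ≤ d_λ S_{0,ρ} for all λ,ρ, then each entry satisfies Z_{λ,μ} ≤ d_λ d_μ. -/
open Matrix Finset

/-- If `Z` is a matrix with non-negative integer entries commuting with a unitary matrix `S`,
`Z o o = 1`, and the ratios `d l = S l o / S o o` are positive reals satisfying the
Perron-Frobenius bound `|S l ρ| ≤ d l * S o ρ`, then `Z l m ≤ d l * d m`. -/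
theorem stmt_0 {Δ : Type*} [Fintype Δ] [DecidableEq Δ] (o : Δ)
    (S Z : Matrix Δ Δ ℂ) (d : Δ → ℝ)
    (hSU : S * S.conjTranspose = 1)
    (hSpos : ∀ ρ, 0 < (S o ρ).re ∧ (S o ρ).im = 0)
    (hd : ∀ l, S l o = (d l : ℂ) * S o o)
    (hdpos : ∀ l, 0 < d l)
    (hPF : ∀ l ρ, ‖S l ρ‖ ≤ d l * (S o ρ).re)
    (hZnat : ∀ l m, ∃ n : ℕ, Z l m = (n : ℂ))
    (hZS : Z * S = S * Z)
    (hZ00 : Z o o = 1) :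
    ∀ l m, (Z l m).re ≤ d l * d m := by
  intro l m
  choose n hn using hZnat
  have hZeq : Z = S * Z * S.conjTranspose := by
    calc Z = Z * (S * S.conjTranspose) := by rw [hSU, mul_one]
    _ = (Z * S) * S.conjTranspose := by rw [mul_assoc]
    _ = S * Z * S.conjTranspose := by rw [hZS]
  have key : ∀ a b, Z a b
      = ∑ σ, ∑ ρ, S a ρ * Z ρ σ * (starRingEnd ℂ) (S b σ) := by
    intro a b
    conv_lhs => rw [hZeq]
    simp only [Matrix.mul_apply, Matrix.conjTranspose_apply, Finset.sum_mul, starRingEnd_apply]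
  -- S o ρ is a positive real
  have hSoreal : ∀ ρ, S o ρ = ((S o ρ).re : ℂ) := by
    intro ρ
    apply Complex.ext
    · simp
    · simp [(hSpos ρ).2]
  -- the key double sum at (o,o) equals 1
  have hsum : ∑ σ, ∑ ρ, (S o ρ).re * (n ρ σ : ℝ) * (S o σ).re = 1 := by
    have h1 : ((1 : ℂ)) = ∑ σ, ∑ ρ, S o ρ * Z ρ σ * (starRingEnd ℂ) (S o σ) := by
      rw [← hZ00]; exact key o o
    have h2 : (∑ σ, ∑ ρ, S o ρ * Z ρ σ * (starRingEnd ℂ) (S o σ))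
        = ((∑ σ, ∑ ρ, (S o ρ).re * (n ρ σ : ℝ) * (S o σ).re : ℝ) : ℂ) := by
      push_cast
      refine Finset.sum_congr rfl fun σ _ => Finset.sum_congr rfl fun ρ _ => ?_
      rw [hn ρ σ, hSoreal ρ, hSoreal σ]
      simp
    rw [h2] at h1
    exact_mod_cast h1.symm
  have habs : ∀ ρ σ, ‖Z ρ σ‖ = (n ρ σ : ℝ) := by
    intro ρ σ; rw [hn ρ σ]; simp
  calc (Z l m).re ≤ ‖Z l m‖ := Complex.re_le_norm _
    _ = ‖∑ σ, ∑ ρ, S l ρ * Z ρ σ * (starRingEnd ℂ) (S m σ)‖ := by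
        rw [key l m]
    _ ≤ ∑ σ, ∑ ρ, ‖S l ρ * Z ρ σ * (starRingEnd ℂ) (S m σ)‖ := by
        refine (norm_sum_le _ _).trans ?_
        exact Finset.sum_le_sum fun σ _ => norm_sum_le _ _
    _ = ∑ σ, ∑ ρ, ‖S l ρ‖ * (n ρ σ : ℝ) * ‖S m σ‖ := by
        refine Finset.sum_congr rfl fun σ _ => Finset.sum_congr rfl fun ρ _ => ?_
        rw [norm_mul, norm_mul, habs, Complex.norm_conj]
    _ ≤ ∑ σ, ∑ ρ, (d l * (S o ρ).re) * (n ρ σ : ℝ) * (d m * (S o σ).re) := by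
        refine Finset.sum_le_sum fun σ _ => Finset.sum_le_sum fun ρ _ => ?_
        have h1 := hPF l ρ
        have h2 := hPF m σ
        have := (hdpos l); have := (hdpos m)
        have hρ := (hSpos ρ).1; have hσ := (hSpos σ).1
        gcongr
    _ = d l * d m * ∑ σ, ∑ ρ, (S o ρ).re * (n ρ σ : ℝ) * (S o σ).re := by
        rw [Finset.mul_sum]
        refine Finset.sum_congr rfl fun σ _ => ?_
        rw [Finset.mul_sum]
        refine Finset.sum_congr rfl fun ρ _ => ?_
        ring
    _ = d l * d m := by rw [hsum, mul_one]
end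

section
/- If Z is a non-negative integer matrix commuting with a unitary matrix S, with Z_{0,0}=1 and d_λ = S_{λ,0}/S_{0,0} ≥ 1 positive for all λ, then the sum of all entries of Z is bounded by 1/S_{0,0}² = Σ_λ d_λ². In particular there are only finitely many such matrices Z. -/
open Matrix Finset

/-- Key bound: under the hypotheses on `S`, any commuting non-negative integer matrix `Z`
with `Z o o = 1` has entry sum at most `1 / (S o o).re ^ 2`. -/
theorem stmt_1_key {Δ : Type*} [Fintype Δ] [DecidableEq Δ] (o : Δ)
    (S : Matrix Δ Δ ℂ) (d : Δ → ℝ)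
    (hSU : S * S.conjTranspose = 1)
    (hS00 : 0 < (S o o).re ∧ (S o o).im = 0)
    (hd : ∀ l, S l o = (d l : ℂ) * S o o)
    (hdge : ∀ l, 1 ≤ d l)
    (Z : Matrix Δ Δ ℂ)
    (hZnat : ∀ l m, ∃ n : ℕ, Z l m = (n : ℂ))
    (hZS : Z * S = S * Z)
    (hZ00 : Z o o = 1) :
    (∑ l, ∑ m, (Z l m).re) ≤ 1 / (S o o).re ^ 2 := by
  set s := (S o o).re with hs
  have hSreal : S o o = (s : ℂ) := Complex.ext rfl (by simp [hS00.2])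
  have hstar : star (S o o) = S o o := by
    rw [hSreal]; exact Complex.conj_ofReal _
  have hC : S.conjTranspose * S = 1 := mul_eq_one_comm.mp hSU
  have hB : S.conjTranspose * Z * S = Z := by
    rw [Matrix.mul_assoc, hZS, ← Matrix.mul_assoc, hC, Matrix.one_mul]
  have hB' : (S.conjTranspose * Z * S) o o = 1 := by rw [hB, hZ00]
  have hexp : (S.conjTranspose * Z * S) o o
      = ∑ m, (∑ l, ((d l : ℂ) * S o o) * Z l m) * ((d m : ℂ) * S o o) := by
    simp only [Matrix.mul_apply, Matrix.conjTranspose_apply]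
    refine Finset.sum_congr rfl fun m _ => ?_
    rw [hd m]
    congr 1
    refine Finset.sum_congr rfl fun l _ => ?_
    rw [hd l, star_mul', hstar, Complex.star_def, Complex.conj_ofReal]
  have h2 : (S o o)^2 * ∑ l, ∑ m, (d l : ℂ) * (d m : ℂ) * Z l m
      = ∑ m, (∑ l, ((d l : ℂ) * S o o) * Z l m) * ((d m : ℂ) * S o o) := by
    simp_rw [Finset.mul_sum, Finset.sum_mul]
    rw [Finset.sum_comm]
    exact Finset.sum_congr rfl fun m _ => Finset.sum_congr rfl fun l _ => by ring
  have hZre : ∀ l m, Z l m = (((Z l m).re : ℝ) : ℂ) := by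
    intro l m; obtain ⟨n, hn⟩ := hZnat l m; rw [hn]; simp
  have hZnn : ∀ l m, (0:ℝ) ≤ (Z l m).re := by
    intro l m; obtain ⟨n, hn⟩ := hZnat l m; rw [hn]; simp
  have hsum : (∑ l, ∑ m, (d l : ℂ) * (d m : ℂ) * Z l m)
      = (((∑ l, ∑ m, d l * d m * (Z l m).re : ℝ)) : ℂ) := by
    push_cast
    refine Finset.sum_congr rfl fun l _ => Finset.sum_congr rfl fun m _ => ?_
    rw [← hZre l m]
  rw [hexp] at hB'
  have hkeyC : ((s : ℂ)) ^ 2 * (((∑ l, ∑ m, d l * d m * (Z l m).re : ℝ)) : ℂ) = 1 := by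
    rw [← hSreal, ← hsum, h2]; exact hB'
  have hkeyR : s ^ 2 * (∑ l, ∑ m, d l * d m * (Z l m).re) = 1 := by
    exact_mod_cast hkeyC
  have hs2 : (0:ℝ) < s ^ 2 := pow_pos hS00.1 2
  have hEq : ∑ l, ∑ m, d l * d m * (Z l m).re = 1 / s ^ 2 := by
    rw [eq_div_iff hs2.ne']
    linarith [hkeyR]
  rw [← hEq]
  refine Finset.sum_le_sum fun l _ => Finset.sum_le_sum fun m _ => ?_
  have h1 := hdge l
  have h2' := hdge m
  have h3 := hZnn l m
  have h4 : 1 ≤ d l * d m := by nlinarith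
  have h5 := mul_le_mul_of_nonneg_right h4 h3
  linarith

/-- If `Z` is a non-negative integer matrix commuting with a unitary matrix `S`, with
`Z o o = 1` and `d l = S l o / S o o ≥ 1` positive for all `l`, then the sum of all entries
of `Z` is bounded by `1 / (S o o)^2 = ∑ l, d l ^ 2`.  In particular there are only finitely
many such matrices `Z`. -/
theorem stmt_1 {Δ : Type*} [Fintype Δ] [DecidableEq Δ] (o : Δ)
    (S Z : Matrix Δ Δ ℂ) (d : Δ → ℝ)
    (hSU : S * S.conjTranspose = 1)
    (hS00 : 0 < (S o o).re ∧ (S o o).im = 0)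
    (hd : ∀ l, S l o = (d l : ℂ) * S o o)
    (hdge : ∀ l, 1 ≤ d l)
    (hPF : ∀ l ρ, ‖S l ρ‖ ≤ d l * ‖S o ρ‖)
    (hZnat : ∀ l m, ∃ n : ℕ, Z l m = (n : ℂ))
    (hZS : Z * S = S * Z)
    (hZ00 : Z o o = 1) :
    (∑ l, ∑ m, (Z l m).re) ≤ 1 / (S o o).re ^ 2 ∧
    (1 / (S o o).re ^ 2 = ∑ l, d l ^ 2) ∧
    {Z' : Matrix Δ Δ ℂ |
      (∀ l m, ∃ n : ℕ, Z' l m = (n : ℂ)) ∧ Z' * S = S * Z' ∧ Z' o o = 1}.Finite := by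
  set s := (S o o).re with hs
  have hSreal : S o o = (s : ℂ) := Complex.ext rfl (by simp [hS00.2])
  have hstar : star (S o o) = S o o := by
    rw [hSreal]; exact Complex.conj_ofReal _
  have hC : S.conjTranspose * S = 1 := mul_eq_one_comm.mp hSU
  have hs2 : (0:ℝ) < s ^ 2 := pow_pos hS00.1 2
  -- part 2
  have hpart2 : 1 / s ^ 2 = ∑ l, d l ^ 2 := by
    have hC' : (S.conjTranspose * S) o o = 1 := by rw [hC]; simp
    have hexp : (S.conjTranspose * S) o o = (((∑ l, d l ^ 2 * s ^ 2 : ℝ)) : ℂ) := by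
      simp only [Matrix.mul_apply, Matrix.conjTranspose_apply]
      rw [Complex.ofReal_sum]
      refine Finset.sum_congr rfl fun l _ => ?_
      rw [hd l, star_mul', hstar, Complex.star_def, Complex.conj_ofReal, hSreal]
      push_cast
      ring
    rw [hexp] at hC'
    have h1 : (∑ l, d l ^ 2 * s ^ 2 : ℝ) = 1 := by exact_mod_cast hC'
    rw [← Finset.sum_mul] at h1
    rw [div_eq_iff hs2.ne']
    linarith
  refine ⟨stmt_1_key o S d hSU hS00 hd hdge Z hZnat hZS hZ00, hpart2, ?_⟩
  -- finiteness
  set B : ℝ := 1 / s ^ 2 with hB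
  set N : ℕ := ⌈B⌉₊ with hN
  set T : Set ℂ := (fun n : ℕ => (n : ℂ)) '' {n | n ≤ N} with hT
  have hTfin : T.Finite := (Set.finite_Iic N).image _
  have hfin : {M : Δ → Δ → ℂ | ∀ l m, M l m ∈ T}.Finite := by
    have hpi : (Set.pi (Set.univ : Set Δ)
        (fun _ => Set.pi (Set.univ : Set Δ) (fun _ => T))).Finite :=
      Set.Finite.pi (fun _ => Set.Finite.pi (fun _ => hTfin))
    refine hpi.subset ?_
    intro M hM
    intro l _
    intro m _
    exact hM l m
  refine Set.Finite.subset hfin ?_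
  rintro Z' ⟨hZ'nat, hZ'S, hZ'00⟩
  intro l m
  obtain ⟨n, hn⟩ := hZ'nat l m
  refine ⟨n, ?_, hn.symm⟩
  have hbound := stmt_1_key o S d hSU hS00 hd hdge Z' hZ'nat hZ'S hZ'00
  have hZ'nn : ∀ a b, (0:ℝ) ≤ (Z' a b).re := by
    intro a b; obtain ⟨k, hk⟩ := hZ'nat a b; rw [hk]; simp
  have hentry : (Z' l m).re ≤ ∑ a, ∑ b, (Z' a b).re := by
    calc (Z' l m).re ≤ ∑ b, (Z' l b).re :=
          Finset.single_le_sum (fun b _ => hZ'nn l b) (Finset.mem_univ m)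
      _ ≤ ∑ a, ∑ b, (Z' a b).re :=
          Finset.single_le_sum (fun a _ => Finset.sum_nonneg fun b _ => hZ'nn a b)
            (Finset.mem_univ l)
  have hnB : (n : ℝ) ≤ B := by
    have hre : (Z' l m).re = (n : ℝ) := by rw [hn]; simp
    rw [← hre]; exact le_trans hentry hbound
  have hfin' : (n : ℝ) ≤ (N : ℝ) := le_trans hnB (Nat.le_ceil B)
  exact_mod_cast hfin'
end

section
/- For the Z_n conformal field theory modular invariants Z^{(δ)}, the diagonal entry Z^{(δ)}_{λ,λ} equals 1 if λ ≡ 0 mod ñ/δ and 0 otherwise, where ñ = n if n is odd and ñ = n/2 if n is even. -/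
/-- Key integer divisibility lemma. -/
lemma key_dvd_iff (α a m c x s r : ℤ) (hα : α ≠ 0) (ha : a ≠ 0)
    (hrs : r * m - s * a = 1) (hc : c = 2 ∨ (c = 1 ∧ Odd m)) :
    (α ∣ x ∧ c * (a * (α * m)) ∣ (2 * s * a) * x) ↔ α * m ∣ x := by
  have hms : IsCoprime m s := ⟨r, -a, by linarith⟩
  constructor
  · rintro ⟨⟨y, rfl⟩, hdvd⟩
    rcases hc with rfl | ⟨rfl, hm⟩
    · -- c = 2
      have h1 : 2 * (a * (α * m)) ∣ 2 * (a * (α * (s * y))) := by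
        rw [show (2:ℤ) * (a * (α * (s * y))) = 2 * s * a * (α * y) by ring]
        exact hdvd
      have h2 : m ∣ s * y :=
        (mul_dvd_mul_iff_left hα).mp <| (mul_dvd_mul_iff_left ha).mp <|
          (mul_dvd_mul_iff_left (two_ne_zero (α := ℤ))).mp h1
      exact mul_dvd_mul_left α (hms.dvd_of_dvd_mul_left h2)
    · -- c = 1, m odd
      obtain ⟨k, hk⟩ := hm
      have hm2 : IsCoprime m (2 : ℤ) := ⟨1, -k, by omega⟩
      have h1 : a * (α * m) ∣ a * (α * (2 * s * y)) := by
        rw [show a * (α * (2 * s * y)) = 2 * s * a * (α * y) by ring]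
        rw [one_mul] at hdvd
        exact hdvd
      have h2 : m ∣ 2 * s * y := (mul_dvd_mul_iff_left hα).mp ((mul_dvd_mul_iff_left ha).mp h1)
      have h3 : m ∣ y := (hm2.mul_right hms).dvd_of_dvd_mul_left (by rw [mul_assoc] at h2 ⊢; exact h2)
      exact mul_dvd_mul_left α h3
  · rintro ⟨y, rfl⟩
    refine ⟨⟨m * y, by ring⟩, ?_⟩
    rcases hc with rfl | ⟨rfl, _⟩
    · exact ⟨s * y, by ring⟩
    · exact ⟨2 * s * y, by ring⟩

/-- For the `ℤ_n` conformal field theory modular invariants `Z⁽δ⁾`, the diagonal entry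
`Z⁽δ⁾_{λ,λ}` equals `1` if `λ ≡ 0 mod nt/δ` and `0` otherwise, where `nt = n` for `n` odd
and `nt = n/2` for `n` even. -/
theorem stmt_2 (n : ℕ) [NeZero n] (nt δ α : ℕ)
    (hnt : nt = if Even n then n / 2 else n)
    (hδ : δ ∣ nt) (hα : α = Nat.gcd δ (nt / δ))
    (r s : ℤ)
    (hrs : r * ((nt / (δ * α) : ℕ) : ℤ) - s * ((δ / α : ℕ) : ℤ) = 1)
    (ω : ℤ)
    (hω : ω = r * ((nt / (δ * α) : ℕ) : ℤ) + s * ((δ / α : ℕ) : ℤ))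
    (hαn : α ∣ n) (hnαn : n / α ∣ n) (hntδn : nt / δ ∣ n)
    (Z : ZMod n → ZMod n → ℕ)
    (hZ : ∀ l m : ZMod n,
      Z l m = if (ZMod.castHom hαn (ZMod α) l = 0 ∧ ZMod.castHom hαn (ZMod α) m = 0 ∧
          ZMod.castHom hnαn (ZMod (n / α)) m
            = (ω : ZMod (n / α)) * ZMod.castHom hnαn (ZMod (n / α)) l)
        then 1 else 0) :
    ∀ l : ZMod n,
      Z l l = if ZMod.castHom hntδn (ZMod (nt / δ)) l = 0 then 1 else 0 := by
  -- basic nonvanishing facts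
  have hn0 : n ≠ 0 := NeZero.ne n
  have hnt0 : nt ≠ 0 := by
    rcases Nat.even_or_odd n with he | ho
    · rw [hnt, if_pos he]
      obtain ⟨k, hk⟩ := he
      omega
    · rw [hnt, if_neg (Nat.not_even_iff_odd.mpr ho)]; exact hn0
  have hδ0 : δ ≠ 0 := by rintro rfl; simp at hδ; omega
  have hα0 : α ≠ 0 := by
    rw [hα]; exact Nat.gcd_ne_zero_left hδ0
  -- set a and m
  set a := δ / α with ha_def
  set m := nt / (δ * α) with hm_def
  have hαδ : α ∣ δ := hα ▸ Nat.gcd_dvd_left δ (nt / δ)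
  have hαntδ : α ∣ nt / δ := hα ▸ Nat.gcd_dvd_right δ (nt / δ)
  have hδa : δ = α * a := (Nat.mul_div_cancel' hαδ).symm
  have ha0 : a ≠ 0 := by rintro h; rw [h, mul_zero] at hδa; exact hδ0 hδa
  have hδαnt : δ * α ∣ nt := by
    obtain ⟨k, hk⟩ := hαntδ
    exact ⟨k, by rw [mul_assoc, ← hk, Nat.mul_div_cancel' hδ]⟩
  have hntδm : nt / δ = α * m := by
    have h1 : nt / δ / α = m := by rw [hm_def, Nat.div_div_eq_div_mul]
    rw [← h1, Nat.mul_div_cancel' hαntδ]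
  have hm0 : m ≠ 0 := by
    rintro h
    rw [h, mul_zero] at hntδm
    have := Nat.div_ne_zero_iff_of_dvd hδ |>.mpr ⟨hnt0, hδ0⟩
    exact this hntδm
  have hntfact : nt = α * (a * (α * m)) := by
    have h := (Nat.mul_div_cancel' hδ).symm
    rw [hntδm] at h
    rw [h, hδa]
    ring
  have hntα : nt / α = a * (α * m) := by
    rw [hntfact, Nat.mul_div_cancel_left _ (Nat.pos_of_ne_zero hα0)]
  have hαnt : α ∣ nt := ⟨a * (α * m), hntfact⟩
  -- n / α = c * (a * (α * m)) with c = 1 or 2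
  obtain ⟨c, hcval, hnα⟩ : ∃ c : ℕ, (c = 2 ∨ (c = 1 ∧ Odd m)) ∧ n / α = c * (a * (α * m)) := by
    rcases Nat.even_or_odd n with he | ho
    · refine ⟨2, Or.inl rfl, ?_⟩
      have hn2 : n = 2 * nt := by
        obtain ⟨k, hk⟩ := he
        rw [hnt, if_pos ⟨k, hk⟩]
        omega
      rw [hn2, Nat.mul_div_assoc 2 hαnt, hntα]
    · refine ⟨1, Or.inr ⟨rfl, ?_⟩, ?_⟩
      · have hmnt : m ∣ nt := ⟨α * a * α, by rw [hntfact]; ring⟩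
        have hmn : m ∣ n := by
          rw [hnt, if_neg (Nat.not_even_iff_odd.mpr ho)] at hmnt; exact hmnt
        rcases Nat.even_or_odd m with hme | hmo
        · exfalso
          obtain ⟨k, hk⟩ := hme
          have : 2 ∣ n := dvd_trans ⟨k, by omega⟩ hmn
          exact (Nat.not_even_iff_odd.mpr ho) (even_iff_two_dvd.mpr this)
        · exact hmo
      · have hn' : n = nt := by rw [hnt, if_neg (Nat.not_even_iff_odd.mpr ho)]
        rw [hn', hntα, one_mul]
  -- NeZero instances
  haveI : NeZero α := ⟨hα0⟩
  haveI : NeZero (n / α) := ⟨by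
    rw [hnα]
    rcases hcval with rfl | ⟨rfl, _⟩ <;> positivity⟩
  haveI : NeZero (nt / δ) := ⟨by rw [hntδm]; positivity⟩
  -- ω - 1 = 2 * s * a
  have hω1 : ω - 1 = 2 * s * (a : ℤ) := by rw [hω]; linarith
  intro l
  rw [hZ]
  set x : ℤ := (l.val : ℤ) with hx
  -- rewrite the three castHom conditions
  have hcast1 : (ZMod.castHom hαn (ZMod α) l = 0) ↔ (α : ℤ) ∣ x := by
    rw [ZMod.castHom_apply, ← ZMod.natCast_val, ZMod.natCast_eq_zero_iff,
      ← Int.natCast_dvd_natCast]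
  have hcast2 : (ZMod.castHom hnαn (ZMod (n / α)) l
      = (ω : ZMod (n / α)) * ZMod.castHom hnαn (ZMod (n / α)) l)
      ↔ ((n / α : ℕ) : ℤ) ∣ (ω - 1) * x := by
    rw [ZMod.castHom_apply, ← ZMod.natCast_val]
    rw [← ZMod.intCast_zmod_eq_zero_iff_dvd]
    have hkey : (((ω - 1) * x : ℤ) : ZMod (n / α))
        = (ω : ZMod (n / α)) * (l.val : ZMod (n / α)) - (l.val : ZMod (n / α)) := by
      rw [hx]; push_cast; ring
    constructor
    · intro h
      rw [hkey, ← h, sub_self]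
    · intro h
      rw [hkey, sub_eq_zero] at h
      exact h.symm
  have hcast3 : (ZMod.castHom hntδn (ZMod (nt / δ)) l = 0) ↔ ((nt / δ : ℕ) : ℤ) ∣ x := by
    rw [ZMod.castHom_apply, ← ZMod.natCast_val, ZMod.natCast_eq_zero_iff,
      ← Int.natCast_dvd_natCast]
  -- the main iff
  have hmain : (ZMod.castHom hαn (ZMod α) l = 0 ∧ ZMod.castHom hαn (ZMod α) l = 0 ∧
      ZMod.castHom hnαn (ZMod (n / α)) l
        = (ω : ZMod (n / α)) * ZMod.castHom hnαn (ZMod (n / α)) l)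
      ↔ ZMod.castHom hntδn (ZMod (nt / δ)) l = 0 := by
    rw [hcast1, hcast2, hcast3, and_self_left, hω1, hntδm, hnα]
    push_cast
    exact key_dvd_iff (α : ℤ) (a : ℤ) (m : ℤ) (c : ℤ) x s r
      (by exact_mod_cast hα0) (by exact_mod_cast ha0) hrs
      (by rcases hcval with rfl | ⟨rfl, hm⟩
          · left; norm_num
          · right; exact ⟨by norm_num, (by exact_mod_cast hm : Odd (m : ℤ))⟩)
  rw [if_congr hmain rfl rfl]
end

section
/- The trace of the Z_n modular invariant Z^{(δ)} equals εδ, where ε = 2 if n is even and ε = 1 if n is odd. -/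
lemma aux_dvd (ε : ℕ) (α d m s v : ℤ) (hco : IsCoprime m s) (hαd : α * d ≠ 0)
    (hcase : (ε = 1 ∧ IsCoprime m 2) ∨ ε = 2) :
    (α ∣ v ∧ (ε : ℤ) * (α * d) * m ∣ 2 * s * d * v) ↔ α * m ∣ v := by
  constructor
  · rintro ⟨⟨u, rfl⟩, h2⟩
    rcases hcase with ⟨hε, hco2⟩ | hε <;> subst hε
    · -- ε = 1 : m ∣ 2*s*u
      obtain ⟨t, ht⟩ := h2
      have hmu : m ∣ (2 * s) * u := ⟨t, by
        apply mul_left_cancel₀ hαd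
        push_cast at ht ⊢
        linarith [ht]⟩
      have := (hco2.mul_right hco).dvd_of_dvd_mul_left hmu
      exact mul_dvd_mul_left α this
    · -- ε = 2 : m ∣ s*u
      obtain ⟨t, ht⟩ := h2
      have hmu : m ∣ s * u := ⟨t, by
        apply mul_left_cancel₀ (mul_ne_zero two_ne_zero hαd)
        push_cast at ht ⊢
        linarith [ht]⟩
      exact mul_dvd_mul_left α (hco.dvd_of_dvd_mul_left hmu)
  · rintro ⟨k, rfl⟩
    refine ⟨⟨m * k, by ring⟩, ?_⟩
    rcases hcase with ⟨hε, -⟩ | hε <;> subst hε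
    · exact ⟨2 * s * k, by push_cast; ring⟩
    · exact ⟨s * k, by push_cast; ring⟩

lemma aux_count (n : ℕ) [NeZero n] (c E : ℕ) (h : n = c * E) :
    ∑ l : ZMod n, (if c ∣ l.val then 1 else 0) = E := by
  have hn0 : n ≠ 0 := NeZero.ne n
  have hc0 : c ≠ 0 := by rintro rfl; simp at h; omega
  rw [← Finset.card_filter]
  rw [show E = (Finset.range E).card from (Finset.card_range E).symm]
  apply Finset.card_bij' (fun l _ => l.val / c) (fun k _ => ((c * k : ℕ) : ZMod n))
  · intro a ha
    simp only [Finset.mem_filter, Finset.mem_univ, true_and] at ha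
    have hv : a.val < n := ZMod.val_lt a
    simp only [Finset.mem_range]
    rw [Nat.div_lt_iff_lt_mul (Nat.pos_of_ne_zero hc0)]
    calc a.val < n := hv
      _ = E * c := by rw [h]; ring
  · intro k hk
    simp only [Finset.mem_range] at hk
    have hlt : c * k < n := by rw [h]; exact (Nat.mul_lt_mul_left (Nat.pos_of_ne_zero hc0)).mpr hk
    simp only [Finset.mem_filter, Finset.mem_univ, true_and]
    rw [ZMod.val_cast_of_lt hlt]
    exact Dvd.intro k rfl
  · intro a ha
    simp only [Finset.mem_filter, Finset.mem_univ, true_and] at ha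
    rw [Nat.mul_div_cancel' ha, ZMod.natCast_val, ZMod.cast_id]
  · intro k hk
    simp only [Finset.mem_range] at hk
    have hlt : c * k < n := by rw [h]; exact (Nat.mul_lt_mul_left (Nat.pos_of_ne_zero hc0)).mpr hk
    rw [ZMod.val_cast_of_lt hlt, Nat.mul_div_cancel_left _ (Nat.pos_of_ne_zero hc0)]

/-- The trace of the `ℤ_n` modular invariant `Z⁽δ⁾` equals `ε·δ`, where `ε = 2` if `n` is
even and `ε = 1` if `n` is odd. -/
theorem stmt_3 (n : ℕ) [NeZero n] (nt δ α : ℕ)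
    (hnt : nt = if Even n then n / 2 else n)
    (hδ : δ ∣ nt) (hα : α = Nat.gcd δ (nt / δ))
    (r s : ℤ)
    (hrs : r * ((nt / (δ * α) : ℕ) : ℤ) - s * ((δ / α : ℕ) : ℤ) = 1)
    (ω : ℤ)
    (hω : ω = r * ((nt / (δ * α) : ℕ) : ℤ) + s * ((δ / α : ℕ) : ℤ))
    (hαn : α ∣ n) (hnαn : n / α ∣ n)
    (Z : ZMod n → ZMod n → ℕ)
    (hZ : ∀ l m : ZMod n,
      Z l m = if (ZMod.castHom hαn (ZMod α) l = 0 ∧ ZMod.castHom hαn (ZMod α) m = 0 ∧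
          ZMod.castHom hnαn (ZMod (n / α)) m
            = (ω : ZMod (n / α)) * ZMod.castHom hnαn (ZMod (n / α)) l)
        then 1 else 0) :
    ∑ l : ZMod n, Z l l = (if Even n then 2 else 1) * δ := by
  have hn0 : n ≠ 0 := NeZero.ne n
  set ε : ℕ := if Even n then 2 else 1 with hε
  set m : ℕ := nt / (δ * α) with hm
  set d : ℕ := δ / α with hd
  -- basic equalities
  have hnE : n = ε * nt := by
    rw [hnt, hε]
    split_ifs with h
    · have := Nat.even_iff.mp h; omega
    · omega
  have hnt0 : nt ≠ 0 := by
    rw [hnt]; split_ifs with h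
    · have := Nat.even_iff.mp h; omega
    · exact hn0
  have hδ0 : δ ≠ 0 := by rintro rfl; exact hnt0 (Nat.eq_zero_of_zero_dvd hδ)
  have hαδ : α ∣ δ := hα ▸ Nat.gcd_dvd_left _ _
  have hα0 : α ≠ 0 := fun h => hδ0 (Nat.eq_zero_of_zero_dvd (h ▸ hαδ))
  haveI : NeZero α := ⟨hα0⟩
  have hδαnt : δ * α ∣ nt := by
    have h1 : α ∣ nt / δ := hα ▸ Nat.gcd_dvd_right _ _
    have := Nat.mul_dvd_mul_left δ h1
    rwa [Nat.mul_div_cancel' hδ] at this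
  have hnt_eq : nt = δ * α * m := (Nat.mul_div_cancel' hδαnt).symm
  have hδ_eq : δ = α * d := (Nat.mul_div_cancel' hαδ).symm
  have hm0 : m ≠ 0 := by rintro h; rw [h] at hnt_eq; omega
  have hd0 : d ≠ 0 := by rintro h; rw [h] at hδ_eq; omega
  have hcn : n = (α * m) * (ε * δ) := by rw [hnE, hnt_eq]; ring
  have hnα : n / α = ε * (α * d) * m := by
    have h1 : n = α * (ε * (α * d) * m) := by rw [hnE, hnt_eq, hδ_eq]; ring
    rw [h1, Nat.mul_div_cancel_left _ (Nat.pos_of_ne_zero hα0)]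
  have hω1 : ω - 1 = 2 * s * d := by rw [hω]; push_cast at hrs ⊢; linarith
  have hco : IsCoprime (m : ℤ) s := ⟨r, -(d : ℤ), by push_cast at hrs ⊢; linarith⟩
  have hcase : (ε = 1 ∧ IsCoprime ((m : ℤ)) 2) ∨ ε = 2 := by
    by_cases h : Even n
    · right; simp [hε, h]
    · left
      refine ⟨by simp [hε, h], ?_⟩
      have hodd : Odd m := by
        rcases Nat.even_or_odd m with he | ho
        · exfalso
          apply h
          rw [hnE, hnt_eq]
          exact (he.mul_left _).mul_left _
        · exact ho
      have h2 : ¬ (2 : ℤ) ∣ (m : ℤ) :=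
        Int.two_dvd_ne_zero.mpr (Int.odd_iff.mp (by exact_mod_cast hodd))
      exact (Int.prime_two.coprime_iff_not_dvd.mpr h2).symm
  -- rewrite each diagonal entry
  have hZdiag : ∀ l : ZMod n, Z l l = if (α * m) ∣ l.val then 1 else 0 := by
    intro l
    rw [hZ l l]
    apply if_congr _ rfl rfl
    have hcast1 : ZMod.castHom hαn (ZMod α) l = ((l.val : ℕ) : ZMod α) := by
      rw [ZMod.castHom_apply, ← ZMod.natCast_val]
    have hcast2 : ZMod.castHom hnαn (ZMod (n / α)) l = ((l.val : ℕ) : ZMod (n / α)) := by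
      rw [ZMod.castHom_apply, ← ZMod.natCast_val]
    rw [hcast1, hcast2, and_self_left]
    rw [ZMod.natCast_eq_zero_iff]
    have h3 : ((l.val : ZMod (n / α)) = (ω : ZMod (n / α)) * (l.val : ZMod (n / α)))
        ↔ ((n / α : ℕ) : ℤ) ∣ (ω - 1) * (l.val : ℤ) := by
      rw [← ZMod.intCast_zmod_eq_zero_iff_dvd]
      constructor
      · intro h
        push_cast
        rw [sub_mul, one_mul, sub_eq_zero]
        push_cast at h
        exact h.symm
      · intro h
        push_cast at h
        rw [sub_mul, one_mul, sub_eq_zero] at h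
        push_cast
        exact h.symm
    rw [h3, hω1, hnα]
    have := aux_dvd ε (α : ℤ) (d : ℤ) (m : ℤ) s (l.val : ℤ) hco
      (by exact_mod_cast mul_ne_zero hα0 hd0) hcase
    rw [show (((ε * (α * d) * m : ℕ)) : ℤ) = (ε : ℤ) * ((α : ℤ) * d) * m by push_cast; ring]
    have hdvd1 : α ∣ l.val ↔ ((α : ℤ) ∣ (l.val : ℤ)) := Int.natCast_dvd_natCast.symm
    have hdvd2 : α * m ∣ l.val ↔ ((α : ℤ) * (m : ℤ) ∣ (l.val : ℤ)) := by
      rw [← Int.natCast_dvd_natCast, Nat.cast_mul]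
    rw [hdvd1, hdvd2]
    exact this
  calc ∑ l : ZMod n, Z l l = ∑ l : ZMod n, (if (α * m) ∣ l.val then 1 else 0) := by
        apply Finset.sum_congr rfl; intro l _; exact hZdiag l
    _ = ε * δ := aux_count n (α * m) (ε * δ) hcn
end

section
/- For the level-1 SO(n) models with n = 16ℓ, the 4×4 matrices 1, W, X_s, X_c = W X_s W, Q = X_s W, and its transpose Qᵀ = W X_s are precisely all the non-negative integer matrices Z with Z_{0,0} = 1 commuting with the given S and T matrices. -/
open Matrix

noncomputable def SO16S : Matrix (Fin 4) (Fin 4) ℂ :=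
  (1 / 2 : ℂ) • !![1, 1, 1, 1; 1, 1, -1, -1; 1, -1, 1, -1; 1, -1, -1, 1]

def SO16W : Matrix (Fin 4) (Fin 4) ℂ :=
  !![1, 0, 0, 0; 0, 1, 0, 0; 0, 0, 0, 1; 0, 0, 1, 0]

def SO16Xs : Matrix (Fin 4) (Fin 4) ℂ :=
  !![1, 0, 1, 0; 0, 0, 0, 0; 1, 0, 1, 0; 0, 0, 0, 0]

noncomputable def SO16Xc : Matrix (Fin 4) (Fin 4) ℂ := SO16W * SO16Xs * SO16W

noncomputable def SO16Q : Matrix (Fin 4) (Fin 4) ℂ := SO16Xs * SO16W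

lemma SO16Xc_eq : SO16Xc = !![1,0,0,1; 0,0,0,0; 0,0,0,0; 1,0,0,1] := by
  ext i j
  fin_cases i <;> fin_cases j <;>
    simp [SO16Xc, SO16W, SO16Xs, Matrix.mul_apply, Fin.sum_univ_four, Matrix.vecHead, Matrix.vecTail]

lemma SO16Q_eq : SO16Q = !![1,0,0,1; 0,0,0,0; 1,0,0,1; 0,0,0,0] := by
  ext i j
  fin_cases i <;> fin_cases j <;>
    simp [SO16Q, SO16W, SO16Xs, Matrix.mul_apply, Fin.sum_univ_four, Matrix.vecHead, Matrix.vecTail]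

lemma SO16Qt_eq : SO16Q.transpose = !![1,0,1,0; 0,0,0,0; 0,0,0,0; 1,0,1,0] := by
  rw [SO16Q_eq]
  ext i j
  fin_cases i <;> fin_cases j <;> simp [Matrix.transpose_apply, Matrix.vecHead, Matrix.vecTail]


private lemma so16_one_S : (1 : Matrix (Fin 4) (Fin 4) ℂ) * SO16S = SO16S * 1 := by
  simp

private lemma so16_W_S : SO16W * SO16S = SO16S * SO16W := by
  ext i j
  fin_cases i <;> fin_cases j <;>
    simp [SO16S, SO16W, Matrix.mul_apply, Fin.sum_univ_four, Matrix.vecHead, Matrix.vecTail]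

private lemma so16_Xs_S : SO16Xs * SO16S = SO16S * SO16Xs := by
  ext i j
  fin_cases i <;> fin_cases j <;>
    simp [SO16S, SO16Xs, Matrix.mul_apply, Fin.sum_univ_four, Matrix.vecHead, Matrix.vecTail]

private lemma so16_Xc_S : SO16Xc * SO16S = SO16S * SO16Xc := by
  rw [SO16Xc_eq]
  ext i j
  fin_cases i <;> fin_cases j <;>
    simp [SO16S, Matrix.mul_apply, Fin.sum_univ_four, Matrix.vecHead, Matrix.vecTail]

private lemma so16_Q_S : SO16Q * SO16S = SO16S * SO16Q := by
  rw [SO16Q_eq]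
  ext i j
  fin_cases i <;> fin_cases j <;>
    simp [SO16S, Matrix.mul_apply, Fin.sum_univ_four, Matrix.vecHead, Matrix.vecTail]

private lemma so16_Qt_S : SO16Q.transpose * SO16S = SO16S * SO16Q.transpose := by
  rw [SO16Qt_eq]
  ext i j
  fin_cases i <;> fin_cases j <;>
    simp [SO16S, Matrix.mul_apply, Fin.sum_univ_four, Matrix.vecHead, Matrix.vecTail]

private lemma so16_W_D :
    SO16W * Matrix.diagonal ![1, -1, 1, 1] = Matrix.diagonal ![(1:ℂ), -1, 1, 1] * SO16W := by
  ext i j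
  fin_cases i <;> fin_cases j <;>
    simp [SO16W, Matrix.diagonal, Matrix.mul_apply, Fin.sum_univ_four, Matrix.vecHead,
      Matrix.vecTail]

private lemma so16_Xs_D :
    SO16Xs * Matrix.diagonal ![1, -1, 1, 1] = Matrix.diagonal ![(1:ℂ), -1, 1, 1] * SO16Xs := by
  ext i j
  fin_cases i <;> fin_cases j <;>
    simp [SO16Xs, Matrix.diagonal, Matrix.mul_apply, Fin.sum_univ_four, Matrix.vecHead,
      Matrix.vecTail]

private lemma so16_Xc_D :
    SO16Xc * Matrix.diagonal ![1, -1, 1, 1] = Matrix.diagonal ![(1:ℂ), -1, 1, 1] * SO16Xc := by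
  rw [SO16Xc_eq]
  ext i j
  fin_cases i <;> fin_cases j <;>
    simp [Matrix.diagonal, Matrix.mul_apply, Fin.sum_univ_four, Matrix.vecHead, Matrix.vecTail]

private lemma so16_Q_D :
    SO16Q * Matrix.diagonal ![1, -1, 1, 1] = Matrix.diagonal ![(1:ℂ), -1, 1, 1] * SO16Q := by
  rw [SO16Q_eq]
  ext i j
  fin_cases i <;> fin_cases j <;>
    simp [Matrix.diagonal, Matrix.mul_apply, Fin.sum_univ_four, Matrix.vecHead, Matrix.vecTail]

private lemma so16_Qt_D :
    SO16Q.transpose * Matrix.diagonal ![1, -1, 1, 1] =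
      Matrix.diagonal ![(1:ℂ), -1, 1, 1] * SO16Q.transpose := by
  rw [SO16Qt_eq]
  ext i j
  fin_cases i <;> fin_cases j <;>
    simp [Matrix.diagonal, Matrix.mul_apply, Fin.sum_univ_four, Matrix.vecHead, Matrix.vecTail]

private lemma so16_one_nat : ∀ i j : Fin 4, ∃ m : ℕ, (1 : Matrix (Fin 4) (Fin 4) ℂ) i j = (m : ℂ) := by
  intro i j
  rcases eq_or_ne i j with h | h
  · exact ⟨1, by simp [Matrix.one_apply, h]⟩
  · exact ⟨0, by simp [Matrix.one_apply, h]⟩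

private lemma so16_W_nat : ∀ i j : Fin 4, ∃ m : ℕ, SO16W i j = (m : ℂ) := by
  intro i j
  fin_cases i <;> fin_cases j <;>
    first
    | (refine ⟨1, ?_⟩; norm_num [SO16W, Matrix.vecHead, Matrix.vecTail]; done)
    | (refine ⟨0, ?_⟩; norm_num [SO16W, Matrix.vecHead, Matrix.vecTail]; done)

private lemma so16_Xs_nat : ∀ i j : Fin 4, ∃ m : ℕ, SO16Xs i j = (m : ℂ) := by
  intro i j
  fin_cases i <;> fin_cases j <;>
    first
    | (refine ⟨1, ?_⟩; norm_num [SO16Xs, Matrix.vecHead, Matrix.vecTail]; done)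
    | (refine ⟨0, ?_⟩; norm_num [SO16Xs, Matrix.vecHead, Matrix.vecTail]; done)

private lemma so16_Xc_nat : ∀ i j : Fin 4, ∃ m : ℕ, SO16Xc i j = (m : ℂ) := by
  intro i j
  rw [SO16Xc_eq]
  fin_cases i <;> fin_cases j <;>
    first
    | (refine ⟨1, ?_⟩; norm_num [Matrix.vecHead, Matrix.vecTail]; done)
    | (refine ⟨0, ?_⟩; norm_num [Matrix.vecHead, Matrix.vecTail]; done)

private lemma so16_Q_nat : ∀ i j : Fin 4, ∃ m : ℕ, SO16Q i j = (m : ℂ) := by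
  intro i j
  rw [SO16Q_eq]
  fin_cases i <;> fin_cases j <;>
    first
    | (refine ⟨1, ?_⟩; norm_num [Matrix.vecHead, Matrix.vecTail]; done)
    | (refine ⟨0, ?_⟩; norm_num [Matrix.vecHead, Matrix.vecTail]; done)

private lemma so16_Qt_nat : ∀ i j : Fin 4, ∃ m : ℕ, SO16Q.transpose i j = (m : ℂ) := by
  intro i j
  rw [SO16Qt_eq]
  fin_cases i <;> fin_cases j <;>
    first
    | (refine ⟨1, ?_⟩; norm_num [Matrix.vecHead, Matrix.vecTail]; done)
    | (refine ⟨0, ?_⟩; norm_num [Matrix.vecHead, Matrix.vecTail]; done)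

set_option maxHeartbeats 4000000 in
/-- For the level-1 `SO(16ℓ)` models, the matrices `1, W, X_s, X_c = W X_s W, Q = X_s W`
and `Qᵀ = W X_s` are precisely all the non-negative integer matrices `Z` with `Z 0 0 = 1`
commuting with the given `S` and `T` matrices. -/
theorem stmt_4 (ζ : ℂ) (hζ : ζ ≠ 0)
    (T : Matrix (Fin 4) (Fin 4) ℂ) (hT : T = ζ • Matrix.diagonal ![1, -1, 1, 1])
    (Z : Matrix (Fin 4) (Fin 4) ℂ) :
    ((∀ i j, ∃ m : ℕ, Z i j = (m : ℂ)) ∧ Z * SO16S = SO16S * Z ∧ Z * T = T * Z ∧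
      Z 0 0 = 1)
    ↔ (Z = 1 ∨ Z = SO16W ∨ Z = SO16Xs ∨ Z = SO16Xc ∨ Z = SO16Q ∨
        Z = SO16Q.transpose) := by
  subst hT
  constructor
  · rintro ⟨hnat, hZS, hZT, h00⟩
    -- entries killed by T-commutation
    have key0 : ∀ i j : Fin 4, -(Z i j * ζ) = ζ * Z i j → Z i j = 0 := by
      intro i j hij
      have h2 : ζ * Z i j = 0 := by linear_combination (-1/2 : ℂ) * hij
      exact (mul_eq_zero.mp h2).resolve_left hζ
    have z01 : Z 0 1 = 0 := by
      have h := congrFun (congrFun hZT 0) 1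
      simp [Matrix.mul_apply, Matrix.diagonal, Fin.sum_univ_four,
        Matrix.vecTail, Matrix.vecHead] at h
      exact key0 0 1 h
    have z21 : Z 2 1 = 0 := by
      have h := congrFun (congrFun hZT 2) 1
      simp [Matrix.mul_apply, Matrix.diagonal, Fin.sum_univ_four,
        Matrix.vecTail, Matrix.vecHead] at h
      exact key0 2 1 h
    have z31 : Z 3 1 = 0 := by
      have h := congrFun (congrFun hZT 3) 1
      simp [Matrix.mul_apply, Matrix.diagonal, Fin.sum_univ_four,
        Matrix.vecTail, Matrix.vecHead] at h
      exact key0 3 1 h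
    have z10 : Z 1 0 = 0 := by
      have h := congrFun (congrFun hZT 1) 0
      simp [Matrix.mul_apply, Matrix.diagonal, Fin.sum_univ_four,
        Matrix.vecTail, Matrix.vecHead] at h
      have h2 : ζ * Z 1 0 = 0 := by linear_combination (1/2 : ℂ) * h
      exact (mul_eq_zero.mp h2).resolve_left hζ
    have z12 : Z 1 2 = 0 := by
      have h := congrFun (congrFun hZT 1) 2
      simp [Matrix.mul_apply, Matrix.diagonal, Fin.sum_univ_four,
        Matrix.vecTail, Matrix.vecHead] at h
      have h2 : ζ * Z 1 2 = 0 := by linear_combination (1/2 : ℂ) * h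
      exact (mul_eq_zero.mp h2).resolve_left hζ
    have z13 : Z 1 3 = 0 := by
      have h := congrFun (congrFun hZT 1) 3
      simp [Matrix.mul_apply, Matrix.diagonal, Fin.sum_univ_four,
        Matrix.vecTail, Matrix.vecHead] at h
      have h2 : ζ * Z 1 3 = 0 := by linear_combination (1/2 : ℂ) * h
      exact (mul_eq_zero.mp h2).resolve_left hζ
    obtain ⟨nb, hb⟩ := hnat 0 2
    obtain ⟨nc, hc⟩ := hnat 0 3
    obtain ⟨nd, hd⟩ := hnat 1 1
    obtain ⟨ne, he⟩ := hnat 2 0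
    obtain ⟨nf, hf⟩ := hnat 2 2
    obtain ⟨ng, hg⟩ := hnat 2 3
    obtain ⟨nh, hh⟩ := hnat 3 0
    obtain ⟨ni, hi⟩ := hnat 3 2
    obtain ⟨nj, hj⟩ := hnat 3 3
    have E01 : (1:ℕ) = nb + nc + nd := by
      have k := congrFun (congrFun hZS 0) 1
      simp [SO16S, Matrix.mul_apply, Fin.sum_univ_four, Matrix.vecTail, Matrix.vecHead,
        z01, z10, z12, z21, z13, z31, h00, hb, hc, hd, he, hf, hg, hh, hi, hj] at k
      exact_mod_cast show (1:ℂ) = nb + nc + nd by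
        first
        | linear_combination 2*k
        | linear_combination (-2 : ℂ)*k
    have E00 : (nb + nc:ℕ) = ne + nh := by
      have k := congrFun (congrFun hZS 0) 0
      simp [SO16S, Matrix.mul_apply, Fin.sum_univ_four, Matrix.vecTail, Matrix.vecHead,
        z01, z10, z12, z21, z13, z31, h00, hb, hc, hd, he, hf, hg, hh, hi, hj] at k
      exact_mod_cast show (nb + nc:ℂ) = ne + nh by
        first
        | linear_combination 2*k
        | linear_combination (-2 : ℂ)*k
        | linear_combination k
        | linear_combination (-1 : ℂ)*k
    have E02 : (1:ℕ) = nc + nf + ni := by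
      have k := congrFun (congrFun hZS 0) 2
      simp [SO16S, Matrix.mul_apply, Fin.sum_univ_four, Matrix.vecTail, Matrix.vecHead,
        z01, z10, z12, z21, z13, z31, h00, hb, hc, hd, he, hf, hg, hh, hi, hj] at k
      exact_mod_cast show (1:ℂ) = nc + nf + ni by
        first
        | linear_combination 2*k
        | linear_combination (-2 : ℂ)*k
        | linear_combination k
        | linear_combination (-1 : ℂ)*k
    have E03 : (1:ℕ) = nb + ng + nj := by
      have k := congrFun (congrFun hZS 0) 3
      simp [SO16S, Matrix.mul_apply, Fin.sum_univ_four, Matrix.vecTail, Matrix.vecHead,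
        z01, z10, z12, z21, z13, z31, h00, hb, hc, hd, he, hf, hg, hh, hi, hj] at k
      exact_mod_cast show (1:ℂ) = nb + ng + nj by
        first
        | linear_combination 2*k
        | linear_combination (-2 : ℂ)*k
        | linear_combination k
        | linear_combination (-1 : ℂ)*k
    have E10 : (1:ℕ) = nd + ne + nh := by
      have k := congrFun (congrFun hZS 1) 0
      simp [SO16S, Matrix.mul_apply, Fin.sum_univ_four, Matrix.vecTail, Matrix.vecHead,
        z01, z10, z12, z21, z13, z31, h00, hb, hc, hd, he, hf, hg, hh, hi, hj] at k
      exact_mod_cast show (1:ℂ) = nd + ne + nh by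
        first
        | linear_combination 2*k
        | linear_combination (-2 : ℂ)*k
        | linear_combination k
        | linear_combination (-1 : ℂ)*k
    have E12 : (nd + nb:ℕ) = nf + ni := by
      have k := congrFun (congrFun hZS 1) 2
      simp [SO16S, Matrix.mul_apply, Fin.sum_univ_four, Matrix.vecTail, Matrix.vecHead,
        z01, z10, z12, z21, z13, z31, h00, hb, hc, hd, he, hf, hg, hh, hi, hj] at k
      exact_mod_cast show (nd + nb:ℂ) = nf + ni by
        first
        | linear_combination 2*k
        | linear_combination (-2 : ℂ)*k
        | linear_combination k
        | linear_combination (-1 : ℂ)*k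
    have E13 : (nd + nc:ℕ) = ng + nj := by
      have k := congrFun (congrFun hZS 1) 3
      simp [SO16S, Matrix.mul_apply, Fin.sum_univ_four, Matrix.vecTail, Matrix.vecHead,
        z01, z10, z12, z21, z13, z31, h00, hb, hc, hd, he, hf, hg, hh, hi, hj] at k
      exact_mod_cast show (nd + nc:ℂ) = ng + nj by
        first
        | linear_combination 2*k
        | linear_combination (-2 : ℂ)*k
        | linear_combination k
        | linear_combination (-1 : ℂ)*k
    have E20 : (1:ℕ) = nh + nf + ng := by
      have k := congrFun (congrFun hZS 2) 0
      simp [SO16S, Matrix.mul_apply, Fin.sum_univ_four, Matrix.vecTail, Matrix.vecHead,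
        z01, z10, z12, z21, z13, z31, h00, hb, hc, hd, he, hf, hg, hh, hi, hj] at k
      exact_mod_cast show (1:ℂ) = nh + nf + ng by
        first
        | linear_combination 2*k
        | linear_combination (-2 : ℂ)*k
        | linear_combination k
        | linear_combination (-1 : ℂ)*k
    have E21 : (nd + ne:ℕ) = nf + ng := by
      have k := congrFun (congrFun hZS 2) 1
      simp [SO16S, Matrix.mul_apply, Fin.sum_univ_four, Matrix.vecTail, Matrix.vecHead,
        z01, z10, z12, z21, z13, z31, h00, hb, hc, hd, he, hf, hg, hh, hi, hj] at k
      exact_mod_cast show (nd + ne:ℂ) = nf + ng by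
        first
        | linear_combination 2*k
        | linear_combination (-2 : ℂ)*k
        | linear_combination k
        | linear_combination (-1 : ℂ)*k
    have E22 : (ne + ni:ℕ) = nb + ng := by
      have k := congrFun (congrFun hZS 2) 2
      simp [SO16S, Matrix.mul_apply, Fin.sum_univ_four, Matrix.vecTail, Matrix.vecHead,
        z01, z10, z12, z21, z13, z31, h00, hb, hc, hd, he, hf, hg, hh, hi, hj] at k
      exact_mod_cast show (ne + ni:ℂ) = nb + ng by
        first
        | linear_combination 2*k
        | linear_combination (-2 : ℂ)*k
        | linear_combination k
        | linear_combination (-1 : ℂ)*k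
    have E23 : (ne + nj:ℕ) = nc + nf := by
      have k := congrFun (congrFun hZS 2) 3
      simp [SO16S, Matrix.mul_apply, Fin.sum_univ_four, Matrix.vecTail, Matrix.vecHead,
        z01, z10, z12, z21, z13, z31, h00, hb, hc, hd, he, hf, hg, hh, hi, hj] at k
      exact_mod_cast show (ne + nj:ℂ) = nc + nf by
        first
        | linear_combination 2*k
        | linear_combination (-2 : ℂ)*k
        | linear_combination k
        | linear_combination (-1 : ℂ)*k
    have E30 : (1:ℕ) = ne + ni + nj := by
      have k := congrFun (congrFun hZS 3) 0
      simp [SO16S, Matrix.mul_apply, Fin.sum_univ_four, Matrix.vecTail, Matrix.vecHead,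
        z01, z10, z12, z21, z13, z31, h00, hb, hc, hd, he, hf, hg, hh, hi, hj] at k
      exact_mod_cast show (1:ℂ) = ne + ni + nj by
        first
        | linear_combination 2*k
        | linear_combination (-2 : ℂ)*k
        | linear_combination k
        | linear_combination (-1 : ℂ)*k
    have E31 : (nd + nh:ℕ) = ni + nj := by
      have k := congrFun (congrFun hZS 3) 1
      simp [SO16S, Matrix.mul_apply, Fin.sum_univ_four, Matrix.vecTail, Matrix.vecHead,
        z01, z10, z12, z21, z13, z31, h00, hb, hc, hd, he, hf, hg, hh, hi, hj] at k
      exact_mod_cast show (nd + nh:ℂ) = ni + nj by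
        first
        | linear_combination 2*k
        | linear_combination (-2 : ℂ)*k
        | linear_combination k
        | linear_combination (-1 : ℂ)*k
    have E32 : (nh + nf:ℕ) = nb + nj := by
      have k := congrFun (congrFun hZS 3) 2
      simp [SO16S, Matrix.mul_apply, Fin.sum_univ_four, Matrix.vecTail, Matrix.vecHead,
        z01, z10, z12, z21, z13, z31, h00, hb, hc, hd, he, hf, hg, hh, hi, hj] at k
      exact_mod_cast show (nh + nf:ℂ) = nb + nj by
        first
        | linear_combination 2*k
        | linear_combination (-2 : ℂ)*k
        | linear_combination k
        | linear_combination (-1 : ℂ)*k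
    have E33 : (nh + ng:ℕ) = nc + ni := by
      have k := congrFun (congrFun hZS 3) 3
      simp [SO16S, Matrix.mul_apply, Fin.sum_univ_four, Matrix.vecTail, Matrix.vecHead,
        z01, z10, z12, z21, z13, z31, h00, hb, hc, hd, he, hf, hg, hh, hi, hj] at k
      exact_mod_cast show (nh + ng:ℂ) = nc + ni by
        first
        | linear_combination 2*k
        | linear_combination (-2 : ℂ)*k
        | linear_combination k
        | linear_combination (-1 : ℂ)*k
    have key1 : (nb = 0 ∧ nc = 0 ∧ nd = 1) ∨ (nb = 1 ∧ nc = 0 ∧ nd = 0) ∨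
        (nb = 0 ∧ nc = 1 ∧ nd = 0) := by omega
    rcases key1 with ⟨rfl, rfl, rfl⟩ | ⟨rfl, rfl, rfl⟩ | ⟨rfl, rfl, rfl⟩
    · have key2 : nf = 1 ∨ nf = 0 := by omega
      rcases key2 with rfl | rfl
      · have key3 : ne = 0 ∧ ng = 0 ∧ nh = 0 ∧ ni = 0 ∧ nj = 1 := by omega
        obtain ⟨rfl, rfl, rfl, rfl, rfl⟩ := key3
        refine Or.inl ?_
        ext i j
        fin_cases i <;> fin_cases j <;>
          simp [Matrix.one_apply, Matrix.vecHead, Matrix.vecTail,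
            z01, z10, z12, z21, z13, z31, h00, hb, hc, hd, he, hf, hg, hh, hi, hj]
      · have key3 : ne = 0 ∧ ng = 1 ∧ nh = 0 ∧ ni = 1 ∧ nj = 0 := by omega
        obtain ⟨rfl, rfl, rfl, rfl, rfl⟩ := key3
        refine Or.inr (Or.inl ?_)
        ext i j
        fin_cases i <;> fin_cases j <;>
          simp [SO16W, Matrix.vecHead, Matrix.vecTail,
            z01, z10, z12, z21, z13, z31, h00, hb, hc, hd, he, hf, hg, hh, hi, hj]
    · have key2 : nf = 1 ∨ nf = 0 := by omega
      rcases key2 with rfl | rfl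
      · have key3 : ne = 1 ∧ ng = 0 ∧ nh = 0 ∧ ni = 0 ∧ nj = 0 := by omega
        obtain ⟨rfl, rfl, rfl, rfl, rfl⟩ := key3
        refine Or.inr (Or.inr (Or.inl ?_))
        ext i j
        fin_cases i <;> fin_cases j <;>
          simp [SO16Xs, Matrix.vecHead, Matrix.vecTail,
            z01, z10, z12, z21, z13, z31, h00, hb, hc, hd, he, hf, hg, hh, hi, hj]
      · have key3 : ne = 0 ∧ ng = 0 ∧ nh = 1 ∧ ni = 1 ∧ nj = 0 := by omega
        obtain ⟨rfl, rfl, rfl, rfl, rfl⟩ := key3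
        refine Or.inr (Or.inr (Or.inr (Or.inr (Or.inr ?_))))
        rw [SO16Qt_eq]
        ext i j
        fin_cases i <;> fin_cases j <;>
          simp [Matrix.vecHead, Matrix.vecTail,
            z01, z10, z12, z21, z13, z31, h00, hb, hc, hd, he, hf, hg, hh, hi, hj]
    · have key2 : ng = 1 ∨ ng = 0 := by omega
      rcases key2 with rfl | rfl
      · have key3 : ne = 1 ∧ nf = 0 ∧ nh = 0 ∧ ni = 0 ∧ nj = 0 := by omega
        obtain ⟨rfl, rfl, rfl, rfl, rfl⟩ := key3
        refine Or.inr (Or.inr (Or.inr (Or.inr (Or.inl ?_))))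
        rw [SO16Q_eq]
        ext i j
        fin_cases i <;> fin_cases j <;>
          simp [Matrix.vecHead, Matrix.vecTail,
            z01, z10, z12, z21, z13, z31, h00, hb, hc, hd, he, hf, hg, hh, hi, hj]
      · have key3 : ne = 0 ∧ nf = 0 ∧ nh = 1 ∧ ni = 0 ∧ nj = 1 := by omega
        obtain ⟨rfl, rfl, rfl, rfl, rfl⟩ := key3
        refine Or.inr (Or.inr (Or.inr (Or.inl ?_)))
        rw [SO16Xc_eq]
        ext i j
        fin_cases i <;> fin_cases j <;>
          simp [Matrix.vecHead, Matrix.vecTail,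
            z01, z10, z12, z21, z13, z31, h00, hb, hc, hd, he, hf, hg, hh, hi, hj]
  · have hTcomm : ∀ A : Matrix (Fin 4) (Fin 4) ℂ,
        A * Matrix.diagonal ![1, -1, 1, 1] = Matrix.diagonal ![(1:ℂ), -1, 1, 1] * A →
        A * (ζ • Matrix.diagonal ![1, -1, 1, 1]) = (ζ • Matrix.diagonal ![1, -1, 1, 1]) * A := by
      intro A h
      rw [mul_smul_comm, smul_mul_assoc, h]
    rintro (rfl | rfl | rfl | rfl | rfl | rfl)
    · exact ⟨so16_one_nat, so16_one_S, by simp, by simp [Matrix.one_apply]⟩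
    · exact ⟨so16_W_nat, so16_W_S, hTcomm _ so16_W_D,
        by norm_num [SO16W]⟩
    · exact ⟨so16_Xs_nat, so16_Xs_S, hTcomm _ so16_Xs_D,
        by norm_num [SO16Xs]⟩
    · exact ⟨so16_Xc_nat, so16_Xc_S, hTcomm _ so16_Xc_D,
        by rw [SO16Xc_eq]; norm_num⟩
    · exact ⟨so16_Q_nat, so16_Q_S, hTcomm _ so16_Q_D,
        by rw [SO16Q_eq]; norm_num⟩
    · exact ⟨so16_Qt_nat, so16_Qt_S, hTcomm _ so16_Qt_D,
        by rw [SO16Qt_eq]; norm_num⟩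
end

section
/- Given a finite commutative fusion ring with non-negative integer structure constants N_{λ,μ}^ν, conjugation λ ↦ λ̄ with N_λ̄ = (N_λ)ᵀ, and a simultaneous unitary diagonalization of the fusion matrices N_λ with eigenvalues γ^λ_ρ, the structure constants are recovered by the Verlinde formula N_{λ,μ}^ν = Σ_ρ (S_{λ,ρ}/S_{0,ρ}) S_{μ,ρ} S_{ν,ρ}*, where S_{λ,ρ}/S_{0,ρ} = γ^λ_ρ. -/
open Matrix Finset

/-- Verlinde formula: for a finite commutative fusion ring with conjugation, whose fusion
matrices are simultaneously diagonalized by a unitary matrix `S` with eigenvalues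
`S l ρ / S o ρ`, the structure constants are recovered as
`N l μ ν = ∑ ρ, (S l ρ / S o ρ) * S μ ρ * conj (S ν ρ)`. -/
theorem stmt_6 {Δ : Type*} [Fintype Δ] [DecidableEq Δ] (o : Δ)
    (N : Δ → Δ → Δ → ℕ) (bar : Δ ≃ Δ)
    (hunit : ∀ μ ν, N o μ ν = if μ = ν then 1 else 0)
    (hcomm : ∀ l m ν, N l m ν = N m l ν)
    (hassoc : ∀ l m ν σ', ∑ β, N l ν β * N m β σ' = ∑ β, N l m β * N β ν σ')
    (hbar : ∀ l μ ν, N (bar l) μ ν = N l ν μ)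
    (S : Matrix Δ Δ ℂ)
    (hSU : S * S.conjTranspose = 1)
    (hS0 : ∀ ρ, S o ρ ≠ 0)
    (heig : ∀ l ρ μ, ∑ ν, (N l μ ν : ℂ) * S ν ρ = (S l ρ / S o ρ) * S μ ρ) :
    ∀ l μ ν, (N l μ ν : ℂ) =
      ∑ ρ, (S l ρ / S o ρ) * S μ ρ * (starRingEnd ℂ) (S ν ρ) := by
  intro l μ ν
  have hid : ∀ σ ν', (∑ ρ, S σ ρ * (starRingEnd ℂ) (S ν' ρ)) = if σ = ν' then 1 else 0 := by
    intro σ ν'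
    have := congrFun (congrFun hSU σ) ν'
    simpa [Matrix.mul_apply, Matrix.conjTranspose_apply, Matrix.one_apply] using this
  calc (N l μ ν : ℂ)
      = ∑ σ, (N l μ σ : ℂ) * ∑ ρ, S σ ρ * (starRingEnd ℂ) (S ν ρ) := by
        simp only [hid]
        simp [mul_ite]
    _ = ∑ ρ, (∑ σ, (N l μ σ : ℂ) * S σ ρ) * (starRingEnd ℂ) (S ν ρ) := by
        simp only [Finset.mul_sum, Finset.sum_mul, mul_assoc]
        exact Finset.sum_comm
    _ = ∑ ρ, (S l ρ / S o ρ) * S μ ρ * (starRingEnd ℂ) (S ν ρ) := by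
        simp only [heig]
end

section
/- Let ω: Δ → Δ be a bijection with ω(0)=0 and define the permutation matrix Z_{λ,μ} = δ_{λ,ω(μ)}. If Z commutes with the S-matrix of a fusion ring (S unitary, diagonalizing the fusion matrices via Verlinde's formula), then ω is an automorphism of the fusion rules: N_{ω(λ),ω(μ)}^{ω(ν)} = N_{λ,μ}^ν for all λ,μ,ν. -/
open Matrix Finset

/-- If the permutation matrix `Z l m = δ_{l, ω m}` (with `ω 0 = 0`) commutes with the
unitary S-matrix defining the fusion coefficients by Verlinde's formula, then `ω` is an
automorphism of the fusion rules: `N (ω l) (ω m) (ω ν) = N l m ν`. -/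
theorem stmt_19 {Δ : Type*} [Fintype Δ] [DecidableEq Δ] (o : Δ)
    (S : Matrix Δ Δ ℂ) (hSU : S * S.conjTranspose = 1) (hS0 : ∀ ρ, S o ρ ≠ 0)
    (N : Δ → Δ → Δ → ℂ)
    (hN : ∀ l m ν, N l m ν = ∑ ρ, S l ρ * S m ρ * (starRingEnd ℂ) (S ν ρ) / S o ρ)
    (ω : Δ ≃ Δ) (hω : ω o = o)
    (Z : Matrix Δ Δ ℂ) (hZ : ∀ l m, Z l m = if l = ω m then 1 else 0)
    (hcomm : Z * S = S * Z) :
    ∀ l m ν, N (ω l) (ω m) (ω ν) = N l m ν := by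
  have key : ∀ l m, S (ω l) (ω m) = S l m := by
    intro l m
    have h : (Z * S) (ω l) m = (S * Z) (ω l) m := by rw [hcomm]
    simp only [Matrix.mul_apply, hZ] at h
    have h1 : (∑ k, (if ω l = ω k then (1:ℂ) else 0) * S k m) = S l m := by
      rw [Finset.sum_eq_single l]
      · simp
      · intro b _ hb
        rw [if_neg (fun hc => hb (ω.injective hc.symm)), zero_mul]
      · simp
    have h2 : (∑ k, S (ω l) k * (if k = ω m then (1:ℂ) else 0)) = S (ω l) (ω m) := by
      rw [Finset.sum_eq_single (ω m)] <;> simp +contextual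
    rw [h1, h2] at h
    exact h.symm
  intro l m ν
  rw [hN, hN]
  rw [← Equiv.sum_comp ω (fun ρ => S (ω l) ρ * S (ω m) ρ * (starRingEnd ℂ) (S (ω ν) ρ) / S o ρ)]
  refine Finset.sum_congr rfl fun ρ _ => ?_
  rw [key, key, key, ← hω, key, hω]
end
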